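/- Let k ≥ 4 and let w be a word over Σ_k satisfying the encodability conditions, with w = u·v where u is the shortest prefix of w containing k−1 distinct letters and |v| = n. If w has period q with q < |w|, then the encoding t(w) (a word of length n over {1,2,3}) also has period q. -/

import Mathlib

/-- The encodability conditions for a word `w` over `Σ_k = Fin k`: `w` contains at
least `k - 1` distinct letters, every factor of length `k - 2` has `k - 2` distinct
letters, and every factor of length `k` contains at least `k - 1` distinct letters. -/
def EncodabilityConditions (k : ℕ) (w : List (Fin k)) : Prop :=
  k - 1 ≤ w.toFinset.card ∧
  (∀ x : List (Fin k), x <:+: w → x.length = k - 2 → x.Nodup) ∧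
  (∀ x : List (Fin k), x <:+: w → x.length = k → k - 1 ≤ x.toFinset.card)

/-- `r` is the ranking permutation of `Σ_k = Fin k` (0-based: the paper's `r[j]` is
`r (j-1)`) determined by the word `p`: the word `r 2, r 3, …, r (k-1)` is the
length-`(k-2)` suffix of `p`, and of the two remaining letters, `r 1` is the one whose
last occurrence in `p` is later (`r 0` possibly not occurring in `p` at all); here a
letter occurring later in `p` has a smaller index in `p.reverse` (a letter not
occurring at all having index `p.length` there). -/
def IsRanking (k : ℕ) (hk : 2 ≤ k) (p : List (Fin k)) (r : Equiv.Perm (Fin k)) : Prop :=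
  (List.ofFn fun j : Fin (k - 2) => r ⟨(j : ℕ) + 2, by have := j.isLt; omega⟩) <:+ p ∧
  p.reverse.idxOf (r ⟨1, by omega⟩) < p.reverse.idxOf (r ⟨0, by omega⟩)

/-- The permutation `σ(j+1)` of the paper (0-based `j : Fin 3`), as a function on
`Fin k`: it fixes the letters `< j` and cyclically shifts the letters in `[j, k)` by
one (for `k ≥ 4`, `(j : ℕ) % k = j`). -/
def sigmaStep (k : ℕ) (j : Fin 3) : Fin k → Fin k := fun x =>
  if (x : ℕ) < (j : ℕ) then x
  else if h : (x : ℕ) + 1 < k then ⟨(x : ℕ) + 1, h⟩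
  else ⟨(j : ℕ) % k, Nat.mod_lt _ x.pos⟩

/-- The morphism `σ : {1,2,3}* → S_k` applied to a word, as a function on `Fin k`
(with `(f * g) x = f (g x)`, i.e. `σ(t₁⋯tₙ) = σ(t₁) ∘ ⋯ ∘ σ(tₙ)`). -/
def sigmaWord (k : ℕ) (ts : List (Fin 3)) : Fin k → Fin k :=
  ts.foldr (fun j acc => sigmaStep k j ∘ acc) id

/-- The word `x` has period `q`: `x_{i+q} = x_i` whenever both positions exist. -/
def HasPeriod {A : Type*} (x : List A) (q : ℕ) : Prop :=
  ∀ (i : ℕ) (h : i + q < x.length), x.get ⟨i + q, h⟩ = x.get ⟨i, by omega⟩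

section Aux

variable {k : ℕ}

lemma suffix_eq_drop' {α : Type*} {l p : List α} (h : l <:+ p) :
    l = p.drop (p.length - l.length) := by
  obtain ⟨s, rfl⟩ := h
  have hl : (s ++ l).length - l.length = s.length := by simp
  rw [hl, List.drop_left]

lemma idx_rev_of_mem {α : Type*} [DecidableEq α] {S p : List α} (h : S <:+ p) {x : α}
    (hx : x ∈ S) : p.reverse.idxOf x = S.reverse.idxOf x := by
  obtain ⟨s, rfl⟩ := h
  rw [List.reverse_append, List.idxOf_append_of_mem (List.mem_reverse.2 hx)]

lemma idx_rev_of_not_mem {α : Type*} [DecidableEq α] {S p : List α} (h : S <:+ p) {x : α}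
    (hx : x ∉ S) : S.length ≤ p.reverse.idxOf x := by
  obtain ⟨s, rfl⟩ := h
  rw [List.reverse_append, List.idxOf_append_of_notMem (by simpa using hx)]
  simp

lemma idx_rev_lt_of_mem {α : Type*} [DecidableEq α] {S p : List α} (h : S <:+ p) {x : α}
    (hx : x ∈ S) : p.reverse.idxOf x < S.length := by
  rw [idx_rev_of_mem h hx]
  have := List.idxOf_lt_length_iff.2 (List.mem_reverse.2 hx)
  simpa using this

/-- The letters `r 0` and `r 1` are not in the pattern word of `r`. -/
lemma not_mem_pattern_of_lt (hk : 2 ≤ k) (r : Equiv.Perm (Fin k)) {c : Fin k}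
    (hc : (c : ℕ) < 2) :
    r c ∉ (List.ofFn fun j : Fin (k - 2) => r ⟨(j : ℕ) + 2, by have := j.isLt; omega⟩) := by
  intro hmem
  rw [List.mem_ofFn] at hmem
  obtain ⟨j, hj⟩ := hmem
  have := r.injective hj
  have : ((⟨(j : ℕ) + 2, by have := j.isLt; omega⟩ : Fin k) : ℕ) = (c : ℕ) := by rw [this]
  simp at this; omega

/-- Any letter not in the pattern word of `r` is `r 0` or `r 1`. -/
lemma eq_of_not_mem_pattern (hk : 2 ≤ k) (r : Equiv.Perm (Fin k)) {x : Fin k}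
    (hx : x ∉ (List.ofFn fun j : Fin (k - 2) => r ⟨(j : ℕ) + 2, by have := j.isLt; omega⟩)) :
    x = r ⟨0, by omega⟩ ∨ x = r ⟨1, by omega⟩ := by
  by_cases h2 : ((r.symm x : Fin k) : ℕ) < 2
  · rcases (show ((r.symm x : Fin k) : ℕ) = 0 ∨ ((r.symm x : Fin k) : ℕ) = 1 by omega)
      with h | h
    · left
      have hc : r.symm x = (⟨0, by omega⟩ : Fin k) := Fin.ext h
      calc x = r (r.symm x) := (r.apply_symm_apply x).symm
        _ = r ⟨0, by omega⟩ := by rw [hc]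
    · right
      have hc : r.symm x = (⟨1, by omega⟩ : Fin k) := Fin.ext h
      calc x = r (r.symm x) := (r.apply_symm_apply x).symm
        _ = r ⟨1, by omega⟩ := by rw [hc]
  · exfalso
    apply hx
    rw [List.mem_ofFn]
    refine ⟨⟨((r.symm x : Fin k) : ℕ) - 2, by have := (r.symm x).isLt; omega⟩, ?_⟩
    have hc : (⟨((r.symm x : Fin k) : ℕ) - 2 + 2, by have := (r.symm x).isLt; omega⟩ : Fin k)
        = r.symm x := Fin.ext (by simp; omega)
    calc r ⟨((r.symm x : Fin k) : ℕ) - 2 + 2, by have := (r.symm x).isLt; omega⟩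
        = r (r.symm x) := by rw [hc]
      _ = x := r.apply_symm_apply x

/-- A ranking of a word is unique. -/
lemma ranking_unique (hk : 2 ≤ k) {p : List (Fin k)} {r r' : Equiv.Perm (Fin k)}
    (h : IsRanking k hk p r) (h' : IsRanking k hk p r') : r = r' := by
  have hpat : (List.ofFn fun j : Fin (k - 2) => r ⟨(j : ℕ) + 2, by have := j.isLt; omega⟩)
      = (List.ofFn fun j : Fin (k - 2) => r' ⟨(j : ℕ) + 2, by have := j.isLt; omega⟩) := by
    rw [suffix_eq_drop' h.1, suffix_eq_drop' h'.1]
    simp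
  have hfun := List.ofFn_inj.1 hpat
  have hagree : ∀ j : Fin (k - 2),
      r ⟨(j : ℕ) + 2, by have := j.isLt; omega⟩ = r' ⟨(j : ℕ) + 2, by have := j.isLt; omega⟩ :=
    fun j => congrFun hfun j
  have h01 : r ⟨0, by omega⟩ ≠ r ⟨1, by omega⟩ := by
    intro hE; have := r.injective hE; simp [Fin.ext_iff] at this
  have hr'1 : r' ⟨1, by omega⟩ = r ⟨0, by omega⟩ ∨ r' ⟨1, by omega⟩ = r ⟨1, by omega⟩ := by
    apply eq_of_not_mem_pattern hk r
    rw [hpat]; exact not_mem_pattern_of_lt hk r' (by simp)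
  have hr'0 : r' ⟨0, by omega⟩ = r ⟨0, by omega⟩ ∨ r' ⟨0, by omega⟩ = r ⟨1, by omega⟩ := by
    apply eq_of_not_mem_pattern hk r
    rw [hpat]; exact not_mem_pattern_of_lt hk r' (by simp)
  have h01' : r' ⟨0, by omega⟩ ≠ r' ⟨1, by omega⟩ := by
    intro hE; have := r'.injective hE; simp [Fin.ext_iff] at this
  have key : r' ⟨1, by omega⟩ = r ⟨1, by omega⟩ ∧ r' ⟨0, by omega⟩ = r ⟨0, by omega⟩ := by
    rcases hr'1 with h1 | h1
    · -- r'1 = r0, then r'0 = r1, contradiction with orders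
      have h0 : r' ⟨0, by omega⟩ = r ⟨1, by omega⟩ := by
        rcases hr'0 with h0 | h0
        · exfalso; exact h01' (h0.trans h1.symm)
        · exact h0
      exfalso
      have o1 := h.2
      have o2 := h'.2
      rw [h1, h0] at o2
      omega
    · refine ⟨h1, ?_⟩
      rcases hr'0 with h0 | h0
      · exact h0
      · exfalso; exact h01' (h0.trans h1.symm)
  apply Equiv.ext
  intro x
  by_cases hx2 : (x : ℕ) < 2
  · rcases (show (x : ℕ) = 0 ∨ (x : ℕ) = 1 by omega) with hx | hx
    · have hx' : x = ⟨0, by omega⟩ := Fin.ext hx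
      rw [hx']; exact key.2.symm
    · have hx' : x = ⟨1, by omega⟩ := Fin.ext hx
      rw [hx']; exact key.1.symm
  · have hx' : x = ⟨((x : ℕ) - 2) + 2, by have := x.isLt; omega⟩ := Fin.ext (by simp; omega)
    rw [hx']
    exact hagree ⟨(x : ℕ) - 2, by have := x.isLt; omega⟩

/-- Transfer of a ranking along a common suffix. -/
lemma ranking_transfer (hk : 2 ≤ k) {p p' S : List (Fin k)} {r : Equiv.Perm (Fin k)}
    (h : IsRanking k hk p r) (hS : S <:+ p) (hS' : S <:+ p') (hlen : k - 2 ≤ S.length)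
    (hx : (r ⟨1, by omega⟩ ∈ S ∧ r ⟨0, by omega⟩ ∉ S) ∨
          (r ⟨1, by omega⟩ ∉ S ∧ r ⟨0, by omega⟩ ∈ S)) :
    IsRanking k hk p' r := by
  have hSlen : S.length ≤ p.length := hS.length_le
  have hpat : (List.ofFn fun j : Fin (k - 2) => r ⟨(j : ℕ) + 2, by have := j.isLt; omega⟩)
      <:+ S := by
    have h1 := suffix_eq_drop' h.1
    simp only [List.length_ofFn] at h1
    obtain ⟨l, hl⟩ := hS
    have h6 : (l ++ S).length - (k - 2) = l.length + (S.length - (k - 2)) := by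
      simp only [List.length_append]
      omega
    rw [h1, ← hl, h6, List.drop_append]
    rw [List.drop_eq_nil_of_le (by omega : l.length ≤ l.length + (S.length - (k - 2)))]
    simpa using List.drop_suffix (S.length - (k - 2)) S
  rcases hx with ⟨h1, h0⟩ | ⟨h1, h0⟩
  · constructor
    · exact hpat.trans hS'
    · calc p'.reverse.idxOf (r ⟨1, by omega⟩) < S.length := idx_rev_lt_of_mem hS' h1
        _ ≤ p'.reverse.idxOf (r ⟨0, by omega⟩) := idx_rev_of_not_mem hS' h0
  · exfalso
    have o1 := h.2
    have c1 : p.reverse.idxOf (r ⟨0, by omega⟩) < S.length := idx_rev_lt_of_mem hS h0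
    have c2 : S.length ≤ p.reverse.idxOf (r ⟨1, by omega⟩) := idx_rev_of_not_mem hS h1
    omega

lemma period_shift {α : Type*} {w : List α} {q : ℕ} (hq : HasPeriod w q)
    (a m : ℕ) (hm : m ≤ a) (ha : a + q ≤ w.length) :
    (w.take (a + q)).drop (a + q - m) = (w.take a).drop (a - m) := by
  apply List.ext_getElem
  · simp; omega
  · intro j h1 h2
    have hj : j < m := by
      simp only [List.length_drop, List.length_take] at h1
      omega
    simp only [List.getElem_drop, List.getElem_take]
    have e1 : a + q - m + j = (a - m + j) + q := by omega
    have hlt : (a - m + j) + q < w.length := by omega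
    have := hq (a - m + j) hlt
    simp only [List.get_eq_getElem] at this
    simp only [e1]
    exact this

end Aux

/-- Let `w = u ++ v` be a word over `Σ_k` (`k ≥ 4`) satisfying the encodability
conditions, with `u` the shortest prefix containing `k - 1` distinct letters, ranking
permutations `r i` and encoding `t` (of length `|v|`).  If `w` has period `q < |w|`,
then the encoding `t` also has period `q`. -/
theorem encoding_has_period (k : ℕ) (hk : 4 ≤ k) (u v : List (Fin k))
    (hw : EncodabilityConditions k (u ++ v))
    (hu : u.toFinset.card = k - 1)
    (hu' : u.dropLast.toFinset.card < k - 1)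
    (r : ℕ → Equiv.Perm (Fin k))
    (hr : ∀ i ≤ v.length, IsRanking k (by omega) (u ++ v.take i) (r i))
    (t : List (Fin 3)) (htl : t.length = v.length)
    (ht : ∀ (i : ℕ) (hi : i < v.length),
      v.get ⟨i, hi⟩ = r i (Fin.castLE (by omega) (t.get ⟨i, by omega⟩)))
    (q : ℕ) (hq : HasPeriod (u ++ v) q) (hql : q < (u ++ v).length) :
    HasPeriod t q := by
  intro i hi
  rw [htl] at hi
  have hiv : i + q < v.length := hi
  have hvi : i < v.length := by omega
  have h2k : (2 : ℕ) ≤ k := by omega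
  have hulen : k - 1 ≤ u.length := hu ▸ List.toFinset_card_le u
  have hwlen : (u ++ v).length = u.length + v.length := by simp
  set a : ℕ := u.length + i with hadef
  have hk1a : k - 1 ≤ a := by omega
  have haq : a + q ≤ (u ++ v).length := by omega
  have hpa : u ++ v.take i = (u ++ v).take a := by
    rw [hadef, List.take_append]; simp
  have hpa' : u ++ v.take (i + q) = (u ++ v).take (a + q) := by
    rw [hadef]
    have h1 : u.length + i + q = u.length + (i + q) := by omega
    rw [h1, List.take_append]; simp
  set p : List (Fin k) := (u ++ v).take a with hpdef
  set p' : List (Fin k) := (u ++ v).take (a + q) with hp'def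
  have hplen : p.length = a := by
    rw [hpdef, List.length_take]; omega
  have hp'len : p'.length = a + q := by
    rw [hp'def, List.length_take]; omega
  have hr1 : IsRanking k h2k p (r i) := hpa ▸ hr i hvi.le
  have hr2 : IsRanking k h2k p' (r (i + q)) := hpa' ▸ hr (i + q) hiv.le
  -- the (k-2)-suffix of p
  set s' : List (Fin k) := p.drop (a - (k - 2)) with hs'def
  have hs'pat : s' =
      (List.ofFn fun j : Fin (k - 2) => (r i) ⟨(j : ℕ) + 2, by have := j.isLt; omega⟩) := by
    rw [hs'def, suffix_eq_drop' hr1.1, hplen]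
    simp
  have hs'len : s'.length = k - 2 := by
    rw [hs'def, List.length_drop, hplen]; omega
  have hs'suf : s' <:+ p := by rw [hs'def]; exact List.drop_suffix _ _
  have hpw : p <+: (u ++ v) := List.take_prefix _ _
  have hs'nd : s'.Nodup :=
    hw.2.1 s' (hs'suf.isInfix.trans hpw.isInfix) hs'len
  -- the letter before the (k-2)-suffix
  have hdlt : a - (k - 1) < p.length := by omega
  set d : Fin k := p[a - (k - 1)]'hdlt with hddef
  have hS1 : p.drop (a - (k - 1)) = d :: s' := by
    rw [List.drop_eq_getElem_cons hdlt, hs'def]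
    congr 2
    omega
  have hne01 : r i ⟨1, by omega⟩ ≠ r i ⟨0, by omega⟩ := by
    intro hE; have := (r i).injective hE; simp [Fin.ext_iff] at this
  have hr0ns : r i ⟨0, by omega⟩ ∉ s' := by
    rw [hs'pat]; exact not_mem_pattern_of_lt h2k (r i) (by simp)
  have hr1ns : r i ⟨1, by omega⟩ ∉ s' := by
    rw [hs'pat]; exact not_mem_pattern_of_lt h2k (r i) (by simp)
  -- main claim: r (i+q) = r i
  have hkey : r (i + q) = r i := by
    by_cases hd : d ∈ s'
    · -- deep case: use the length-k suffix
      have hka : k ≤ a := by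
        by_contra hka
        have ha1 : a = k - 1 := by omega
        have hi0 : i = 0 := by omega
        have hu0 : u.length = k - 1 := by omega
        have hpu : p = u := by
          have ha2 : a = u.length := by omega
          rw [hpdef, ha2]
          exact List.take_left
        have hund : u.Nodup := by
          have hcard : u.toFinset.card = u.length := by rw [hu, hu0]
          exact Multiset.toFinset_card_eq_card_iff_nodup.1 hcard
        have hnd2 : (p.drop (a - (k - 1))).Nodup := by
          rw [hpu]; exact hund.sublist (List.drop_sublist _ _)
        rw [hS1] at hnd2
        exact (List.nodup_cons.1 hnd2).1 hd
      have helt : a - k < p.length := by omega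
      set e : Fin k := p[a - k]'helt with hedef
      set S : List (Fin k) := p.drop (a - k) with hSdef
      have hS2 : S = e :: d :: s' := by
        rw [hSdef, List.drop_eq_getElem_cons helt]
        have h1 : a - k + 1 = a - (k - 1) := by omega
        rw [h1, hS1]
      have hSlen : S.length = k := by
        rw [hS2]; simp [hs'len]; omega
      have hSsuf : S <:+ p := by rw [hSdef]; exact List.drop_suffix _ _
      have hScard : k - 1 ≤ S.toFinset.card :=
        hw.2.2 S (hSsuf.isInfix.trans hpw.isInfix) hSlen
      have hes' : e ∉ s' := by
        intro he
        have hsub : S.toFinset = s'.toFinset := by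
          rw [hS2, List.toFinset_cons, List.toFinset_cons,
            Finset.insert_eq_self.2 (List.mem_toFinset.2 hd),
            Finset.insert_eq_self.2 (List.mem_toFinset.2 he)]
        rw [hsub, List.toFinset_card_of_nodup hs'nd, hs'len] at hScard
        omega
      have hed : e ≠ d := fun hE => hes' (hE ▸ hd)
      have hmemS : ∀ x : Fin k, x ∈ S ↔ (x = e ∨ x = d ∨ x ∈ s') := by
        intro x; rw [hS2]; simp
      have he01 : e = r i ⟨0, by omega⟩ ∨ e = r i ⟨1, by omega⟩ := by
        apply eq_of_not_mem_pattern h2k (r i)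
        have := hes'
        rw [hs'pat] at this
        exact this
      have hSsuf' : S <:+ p' := by
        have hps := period_shift hq a k (by omega) haq
        have hSp' : S = p'.drop (a + q - k) := by
          rw [hSdef]; exact hps.symm
        rw [hSp']
        exact List.drop_suffix _ _
      have hx : (r i ⟨1, by omega⟩ ∈ S ∧ r i ⟨0, by omega⟩ ∉ S) ∨
          (r i ⟨1, by omega⟩ ∉ S ∧ r i ⟨0, by omega⟩ ∈ S) := by
        rcases he01 with he0 | he1
        · right
          constructor
          · rw [hmemS]
            push_neg
            refine ⟨?_, ?_, hr1ns⟩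
            · rw [← he0] at hne01
              exact hne01
            · intro hE; exact hr1ns (hE ▸ hd)
          · rw [hmemS]; left; exact he0.symm
        · left
          constructor
          · rw [hmemS]; left; exact he1.symm
          · rw [hmemS]
            push_neg
            refine ⟨?_, ?_, hr0ns⟩
            · rw [← he1] at hne01
              exact fun hE => hne01 hE.symm
            · intro hE; exact hr0ns (hE ▸ hd)
      have hrk : IsRanking k h2k p' (r i) :=
        ranking_transfer h2k hr1 hSsuf hSsuf' (by omega) hx
      exact ranking_unique h2k hr2 hrk
    · -- shallow case: use the length-(k-1) suffix
      set S : List (Fin k) := p.drop (a - (k - 1)) with hSdef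
      have hS2 : S = d :: s' := hS1
      have hSsuf : S <:+ p := by rw [hSdef]; exact List.drop_suffix _ _
      have hd01 : d = r i ⟨0, by omega⟩ ∨ d = r i ⟨1, by omega⟩ := by
        apply eq_of_not_mem_pattern h2k (r i)
        have := hd
        rw [hs'pat] at this
        exact this
      have hSsuf' : S <:+ p' := by
        have hps := period_shift hq a (k - 1) (by omega) haq
        have hSp' : S = p'.drop (a + q - (k - 1)) := by
          rw [hSdef]; exact hps.symm
        rw [hSp']
        exact List.drop_suffix _ _
      have hmemS : ∀ x : Fin k, x ∈ S ↔ (x = d ∨ x ∈ s') := by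
        intro x; rw [hS2]; simp
      have hSlen : S.length = k - 1 := by rw [hS2]; simp [hs'len]; omega
      have hx : (r i ⟨1, by omega⟩ ∈ S ∧ r i ⟨0, by omega⟩ ∉ S) ∨
          (r i ⟨1, by omega⟩ ∉ S ∧ r i ⟨0, by omega⟩ ∈ S) := by
        rcases hd01 with hd0 | hd1
        · right
          constructor
          · rw [hmemS]
            push_neg
            refine ⟨?_, hr1ns⟩
            rw [← hd0] at hne01
            exact hne01
          · rw [hmemS]; left; exact hd0.symm
        · left
          constructor
          · rw [hmemS]; left; exact hd1.symm
          · rw [hmemS]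
            push_neg
            refine ⟨?_, hr0ns⟩
            rw [← hd1] at hne01
            exact fun hE => hne01 hE.symm
      have hrk : IsRanking k h2k p' (r i) :=
        ranking_transfer h2k hr1 hSsuf hSsuf' (by omega) hx
      exact ranking_unique h2k hr2 hrk
  -- conclude
  have hveq : v.get ⟨i + q, hiv⟩ = v.get ⟨i, hvi⟩ := by
    have hlt : (u.length + i) + q < (u ++ v).length := by
      simp only [List.length_append]; omega
    have h3 := hq (u.length + i) hlt
    simp only [List.get_eq_getElem] at h3 ⊢
    have h1 : (u ++ v)[u.length + i + q]'hlt = v[i + q]'hiv := by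
      rw [List.getElem_append_right (by omega : u.length ≤ u.length + i + q)]
      simp only [show u.length + i + q - u.length = i + q from by omega]
    have h2 : (u ++ v)[u.length + i]'(by simp only [List.length_append]; omega)
        = v[i]'hvi := by
      rw [List.getElem_append_right (by omega : u.length ≤ u.length + i)]
      simp only [show u.length + i - u.length = i from by omega]
    exact h1.symm.trans (h3.trans h2)
  have hv1 := ht i hvi
  have hv2 := ht (i + q) hiv
  rw [hkey] at hv2
  rw [hv1, hv2] at hveq
  have hcast := (r i).injective hveq
  have hval : ((t.get ⟨i + q, by omega⟩ : Fin 3) : ℕ) = ((t.get ⟨i, by omega⟩ : Fin 3) : ℕ) := by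
    have := congrArg Fin.val hcast
    simpa using this
  exact Fin.ext hval
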